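/- Weak Number Avoidance Theorem: Let G be a game that is not equivalent to any number, and let x be a number. Then x ⧏ G if and only if there exists a left option G^L of G with x ≤ G^L. -/

import Mathlib

universe u

namespace SetTheory

/-- Pre-games (removed from Mathlib; restored with the old definition). -/
inductive PGame : Type (u + 1)
  | mk : ∀ α β : Type u, (α → PGame) → (β → PGame) → PGame

namespace PGame

/-- The type of left moves. -/
def LeftMoves : PGame.{u} → Type u
  | mk l _ _ _ => l

/-- The type of right moves. -/
def RightMoves : PGame.{u} → Type u
  | mk _ r _ _ => r

/-- The left options. -/
def moveLeft : ∀ g : PGame.{u}, LeftMoves g → PGame.{u}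
  | mk _ _ L _ => L

/-- The right options. -/
def moveRight : ∀ g : PGame.{u}, RightMoves g → PGame.{u}
  | mk _ _ _ R => R

/-- Simultaneous recursive definition of `x ≤ y` (first component) and `x ⧏ y` (second). -/
noncomputable def leLF (x : PGame.{u}) : PGame.{u} → Prop × Prop :=
  PGame.rec (motive := fun _ => PGame.{u} → Prop × Prop)
    (fun _ _ _ _ ihxL ihxR y =>
      PGame.rec (motive := fun _ => Prop × Prop)
        (fun yl yr yL yR ihyL ihyR =>
          ((∀ i, (ihxL i (mk yl yr yL yR)).2) ∧ ∀ j, (ihyR j).2,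
           (∃ i, (ihyL i).1) ∨ ∃ j, (ihxR j (mk yl yr yL yR)).1))
        y) x

noncomputable instance : LE PGame.{u} := ⟨fun x y => (leLF x y).1⟩

/-- `x ⧏ y` means `¬ y ≤ x`. -/
def LF (x y : PGame.{u}) : Prop := ¬y ≤ x

infixl:50 " ⧏ " => PGame.LF

noncomputable instance : LT PGame.{u} := ⟨fun x y => x ≤ y ∧ ¬y ≤ x⟩

/-- Equivalence of pre-games. -/
def Equiv (x y : PGame.{u}) : Prop := x ≤ y ∧ y ≤ x

instance : HasEquiv PGame.{u} := ⟨Equiv⟩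

/-- A pre-game is numeric if its options are numeric and every left option is less than
every right option. -/
def Numeric : PGame.{u} → Prop
  | ⟨_, _, L, R⟩ => (∀ i j, L i < R j) ∧ (∀ i, Numeric (L i)) ∧ ∀ j, Numeric (R j)

end PGame

end SetTheory


namespace SetTheory

namespace PGame

theorem leLF_mk_fst (xl xr : Type u) (xL : xl → PGame.{u}) (xR : xr → PGame.{u})
    (yl yr : Type u) (yL : yl → PGame.{u}) (yR : yr → PGame.{u}) :
    (leLF (mk xl xr xL xR) (mk yl yr yL yR)).1 =
      ((∀ i, (leLF (xL i) (mk yl yr yL yR)).2) ∧ ∀ j, (leLF (mk xl xr xL xR) (yR j)).2) := rfl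

theorem leLF_mk_snd (xl xr : Type u) (xL : xl → PGame.{u}) (xR : xr → PGame.{u})
    (yl yr : Type u) (yL : yl → PGame.{u}) (yR : yr → PGame.{u}) :
    (leLF (mk xl xr xL xR) (mk yl yr yL yR)).2 =
      ((∃ i, (leLF (mk xl xr xL xR) (yL i)).1) ∨ ∃ j, (leLF (xR j) (mk yl yr yL yR)).1) := rfl

theorem leLF_snd_iff (x y : PGame.{u}) :
    ((leLF x y).2 ↔ ¬(leLF y x).1) ∧ ((leLF y x).2 ↔ ¬(leLF x y).1) := by
  induction x generalizing y with
  | mk xl xr xL xR ihxL ihxR =>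
    induction y with
    | mk yl yr yL yR ihyL ihyR =>
      have h1 : ∀ i, (leLF (yL i) (mk xl xr xL xR)).2 ↔ ¬(leLF (mk xl xr xL xR) (yL i)).1 :=
        fun i => (ihyL i).2
      have h2 : ∀ j, (leLF (mk yl yr yL yR) (xR j)).2 ↔ ¬(leLF (xR j) (mk yl yr yL yR)).1 :=
        fun j => (ihxR j _).2
      have h3 : ∀ i, (leLF (xL i) (mk yl yr yL yR)).2 ↔ ¬(leLF (mk yl yr yL yR) (xL i)).1 :=
        fun i => (ihxL i _).1
      have h4 : ∀ j, (leLF (mk xl xr xL xR) (yR j)).2 ↔ ¬(leLF (yR j) (mk xl xr xL xR)).1 :=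
        fun j => (ihyR j).1
      simp only [leLF_mk_fst, leLF_mk_snd, h1, h2, h3, h4, not_and_or, not_forall, not_not]
      exact ⟨trivial, trivial⟩

theorem le_iff_lf {x y : PGame.{u}} :
    x ≤ y ↔ (∀ i, x.moveLeft i ⧏ y) ∧ ∀ j, x ⧏ y.moveRight j := by
  cases x with
  | mk xl xr xL xR =>
    cases y with
    | mk yl yr yL yR =>
      change (leLF (mk xl xr xL xR) (mk yl yr yL yR)).1 ↔ _
      rw [leLF_mk_fst]
      exact and_congr (forall_congr' fun i => (leLF_snd_iff _ _).1)
        (forall_congr' fun j => (leLF_snd_iff _ _).1)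

theorem lf_iff_exists_le {x y : PGame.{u}} :
    x ⧏ y ↔ (∃ i, x ≤ y.moveLeft i) ∨ ∃ j, x.moveRight j ≤ y := by
  cases x with
  | mk xl xr xL xR =>
    cases y with
    | mk yl yr yL yR =>
      change ¬ (leLF (mk yl yr yL yR) (mk xl xr xL xR)).1 ↔ _
      rw [← (leLF_snd_iff (mk xl xr xL xR) (mk yl yr yL yR)).1, leLF_mk_snd]
      exact Iff.rfl

theorem not_ge {x y : PGame.{u}} : ¬x ≤ y ↔ y ⧏ x := Iff.rfl

theorem le_refl' (x : PGame.{u}) : x ≤ x := by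
  induction x with
  | mk xl xr xL xR ihL ihR =>
    exact le_iff_lf.2 ⟨fun i => lf_iff_exists_le.2 (Or.inl ⟨i, ihL i⟩),
      fun j => lf_iff_exists_le.2 (Or.inr ⟨j, ihR j⟩)⟩

theorem moveLeft_lf {x : PGame.{u}} (i : x.LeftMoves) : x.moveLeft i ⧏ x :=
  lf_iff_exists_le.2 (Or.inl ⟨i, le_refl' _⟩)

theorem lf_moveRight {x : PGame.{u}} (j : x.RightMoves) : x ⧏ x.moveRight j :=
  lf_iff_exists_le.2 (Or.inr ⟨j, le_refl' _⟩)

theorem le_trans_aux (x y z : PGame.{u}) :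
    (x ≤ y → y ≤ z → x ≤ z) ∧ (y ≤ z → z ≤ x → y ≤ x) ∧ (z ≤ x → x ≤ y → z ≤ y) := by
  induction x generalizing y z with
  | mk xl xr xL xR ihxL ihxR =>
  induction y generalizing z with
  | mk yl yr yL yR ihyL ihyR =>
  induction z with
  | mk zl zr zL zR ihzL ihzR =>
  refine ⟨fun h1 h2 => ?_, fun h1 h2 => ?_, fun h1 h2 => ?_⟩
  · exact le_iff_lf.2 ⟨fun i hz => (le_iff_lf.1 h1).1 i ((ihxL i _ _).2.1 h2 hz),
      fun k hx => (le_iff_lf.1 h2).2 k ((ihzR k).2.2 hx h1)⟩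
  · exact le_iff_lf.2 ⟨fun i hx => (le_iff_lf.1 h1).1 i ((ihyL i _).2.2 h2 hx),
      fun k hk => (le_iff_lf.1 h2).2 k ((ihxR k _ _).1 hk h1)⟩
  · exact le_iff_lf.2 ⟨fun i hy => (le_iff_lf.1 h1).1 i ((ihzL i).1 h2 hy),
      fun k hk => (le_iff_lf.1 h2).2 k ((ihyR k _).2.1 hk h1)⟩

instance : Preorder PGame.{u} where
  le := fun x y => x ≤ y
  lt := fun x y => x < y
  le_refl := le_refl'
  le_trans := fun x y z => (le_trans_aux x y z).1
  lt_iff_le_not_ge := fun _ _ => Iff.rfl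

theorem lf_of_le_of_lf {x y z : PGame.{u}} (h1 : x ≤ y) (h2 : y ⧏ z) : x ⧏ z :=
  fun hz => h2 ((le_trans_aux z x y).1 hz h1)

theorem lf_of_lf_of_le {x y z : PGame.{u}} (h1 : x ⧏ y) (h2 : y ≤ z) : x ⧏ z :=
  fun hz => h1 ((le_trans_aux y z x).1 h2 hz)

theorem _root_.LE.le.trans_lf {x y z : PGame.{u}} (h1 : x ≤ y) (h2 : y ⧏ z) : x ⧏ z :=
  lf_of_le_of_lf h1 h2

noncomputable def moveRecOn {C : PGame.{u} → Sort*} (x : PGame.{u})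
    (IH : ∀ y : PGame.{u}, (∀ i, C (y.moveLeft i)) → (∀ j, C (y.moveRight j)) → C y) : C x :=
  x.recOn fun yl yr yL yR => IH (mk yl yr yL yR)

theorem Numeric.moveRight {x : PGame.{u}} (o : Numeric x) (j : x.RightMoves) :
    Numeric (x.moveRight j) := by
  cases x with
  | mk xl xr xL xR =>
    unfold Numeric at o
    exact o.2.2 j

theorem numeric_aux (x : PGame.{u}) (o : Numeric x) :
    (∀ j, x ≤ x.moveRight j) ∧ ∀ i, x.moveLeft i ≤ x := by
  induction x with
  | mk xl xr xL xR ihL ihR =>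
  unfold Numeric at o
  obtain ⟨hlt, hl, hr⟩ := o
  constructor
  · intro j
    exact le_iff_lf.2 ⟨fun i h => And.right (hlt i j) h,
      fun k => lf_of_lf_of_le (lf_moveRight j) ((ihR j (hr j)).1 k)⟩
  · intro i
    exact le_iff_lf.2 ⟨fun i' => lf_of_le_of_lf ((ihL i (hl i)).2 i') (moveLeft_lf i),
      fun j h => And.right (hlt i j) h⟩

theorem Numeric.lt_moveRight {x : PGame.{u}} (o : Numeric x) (j : x.RightMoves) :
    x < x.moveRight j :=
  ⟨(numeric_aux x o).1 j, lf_moveRight j⟩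

end PGame

end SetTheory

open SetTheory PGame

private lemma weak_number_avoidance_aux (G : PGame)
    (hG : ∀ y : PGame, y.Numeric → ¬ (G ≈ y)) :
    ∀ x : PGame, x.Numeric → x ⧏ G → ∃ i : G.LeftMoves, x ≤ G.moveLeft i := by
  intro x
  induction x using PGame.moveRecOn with
  | _ x IHl IHr =>
    intro hx h
    rw [PGame.lf_iff_exists_le] at h
    rcases h with ⟨i, hi⟩ | ⟨j, hj⟩
    · exact ⟨i, hi⟩
    · have hx' := hx.moveRight j
      have hlf : x.moveRight j ⧏ G :=
        PGame.not_ge.mp fun hle => hG _ hx' ⟨hle, hj⟩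
      obtain ⟨i, hi⟩ := IHr j hx' hlf
      exact ⟨i, (hx.lt_moveRight j).le.trans hi⟩

/-- Weak Number Avoidance Theorem: if the game `G` is not equivalent to any
number and `x` is a number, then `x ⧏ G` iff `x ≤ G^L` for some left option
`G^L` of `G`. -/
theorem weak_number_avoidance (G x : PGame) (hx : x.Numeric)
    (hG : ∀ y : PGame, y.Numeric → ¬ (G ≈ y)) :
    x ⧏ G ↔ ∃ i : G.LeftMoves, x ≤ G.moveLeft i := by
  constructor
  · exact weak_number_avoidance_aux G hG x hx
  · rintro ⟨i, hi⟩
    exact hi.trans_lf (PGame.moveLeft_lf i)
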